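/- Let Λ = ℤ + τℤ be a lattice in ℂ with τ ∈ ℍ, let α ∈ ℂ* satisfy αΛ ⊆ Λ with αᾱ = p (p prime), and write α = cτ + d with c,d ∈ ℤ. Choose a,b ∈ ℤ with ad − bc = 1 and set τ̂ = (aτ+b)/(cτ+d). Then the map z + Λ ↦ z/α + Λ̂, where Λ̂ = ℤ + τ̂ℤ, is a well-defined isomorphism of complex tori ℂ/Λ → ℂ/Λ̂ under which the subgroup (1/ᾱ)ℤ + Λ of ℂ/Λ maps onto the subgroup (1/p)ℤ + Λ̂ of ℂ/Λ̂. -/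

import Mathlib

open QuotientAddGroup

noncomputable def mulLeftAddEquiv (α : ℂ) (hα : α ≠ 0) : ℂ ≃+ ℂ :=
  AddEquiv.mk' (Equiv.mulLeft₀ α hα) (mul_add α)

/-- let `Λ = ℤ + τℤ` with `τ` in the upper half plane, let `α ∈ ℂ*` satisfy
`αΛ ⊆ Λ` and `αᾱ = p` with `p` prime, write `α = cτ + d` and choose `a, b ∈ ℤ` with
`ad − bc = 1`; set `τ̂ = (aτ + b)/(cτ + d)` and `Λ̂ = ℤ + τ̂ℤ`. Then `z + Λ ↦ z/α + Λ̂` is a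
well-defined isomorphism of complex tori `ℂ/Λ → ℂ/Λ̂` mapping the subgroup `(1/ᾱ)ℤ + Λ`
of `ℂ/Λ` onto the subgroup `(1/p)ℤ + Λ̂` of `ℂ/Λ̂`. -/
theorem complex_torus_isogeny_normalization (τ : ℂ) (hτ : 0 < τ.im)
    (α : ℂ) (hα : α ≠ 0) (p : ℕ) (hp : p.Prime)
    (a b c d : ℤ)
    (hαcd : α = c * τ + d) (hdet : a * d - b * c = 1)
    (hnorm : α * (starRingEnd ℂ) α = p)
    (Λ Λhat : AddSubgroup ℂ)
    (hΛ : Λ = AddSubgroup.closure ({1, τ} : Set ℂ))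
    (hΛhat : Λhat = AddSubgroup.closure ({1, (a * τ + b) / (c * τ + d)} : Set ℂ))
    (hstab : ∀ z ∈ Λ, α * z ∈ Λ) :
    ∃ e : (ℂ ⧸ Λ) ≃+ (ℂ ⧸ Λhat),
      (∀ z : ℂ, e (QuotientAddGroup.mk z) = QuotientAddGroup.mk (z / α)) ∧
      AddSubgroup.map e.toAddMonoidHom
          (AddSubgroup.zmultiples
            (QuotientAddGroup.mk (1 / (starRingEnd ℂ) α) : ℂ ⧸ Λ)) =
        AddSubgroup.zmultiples (QuotientAddGroup.mk (1 / (p : ℂ)) : ℂ ⧸ Λhat) := by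
  have hcd : (c : ℂ) * τ + d ≠ 0 := hαcd ▸ hα
  have hdetC : (a : ℂ) * d - (b : ℂ) * c = 1 := by exact_mod_cast congrArg (Int.cast : ℤ → ℂ) hdet
  set T : ℂ := (a * τ + b) / (c * τ + d) with hT
  set u : ℂ ≃+ ℂ := mulLeftAddEquiv α⁻¹ (inv_ne_zero hα) with hu
  have huapp : ∀ z : ℂ, u z = z / α := fun z => by
    show α⁻¹ * z = z / α
    rw [div_eq_mul_inv, mul_comm]
  -- key algebraic identities
  have id1 : u (1 : ℂ) = a • (1 : ℂ) - c • T := by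
    rw [huapp, hαcd, hT, zsmul_eq_mul, zsmul_eq_mul]
    field_simp
    linear_combination (1 : ℂ) - hdetC
  have id2 : u τ = d • T - b • (1 : ℂ) := by
    rw [huapp, hαcd, hT, zsmul_eq_mul, zsmul_eq_mul]
    rw [mul_div_assoc', eq_sub_iff_add_eq, div_add' _ _ _ hcd, div_left_inj' hcd]
    linear_combination -(τ * hdetC)
  have id3 : (1 : ℂ) = c • u τ + d • u (1 : ℂ) := by
    rw [huapp, huapp, hαcd, zsmul_eq_mul, zsmul_eq_mul]
    field_simp
  have id4 : T = a • u τ + b • u (1 : ℂ) := by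
    rw [huapp, huapp, hαcd, hT, zsmul_eq_mul, zsmul_eq_mul]
    field_simp
  have hmap : Λ.map (u : ℂ →+ ℂ) = Λhat := by
    rw [hΛ, hΛhat, AddMonoidHom.map_closure]
    apply le_antisymm
    · rw [AddSubgroup.closure_le]
      have h1 : (1 : ℂ) ∈ AddSubgroup.closure ({1, T} : Set ℂ) :=
        AddSubgroup.subset_closure (by simp)
      have h2 : T ∈ AddSubgroup.closure ({1, T} : Set ℂ) :=
        AddSubgroup.subset_closure (by simp)
      rintro x ⟨y, hy, rfl⟩
      have hy' : y = 1 ∨ y = τ := hy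
      simp only [SetLike.mem_coe, AddMonoidHom.coe_coe]
      rcases hy' with rfl | rfl
      · rw [id1]
        exact sub_mem (AddSubgroup.zsmul_mem _ h1 a) (AddSubgroup.zsmul_mem _ h2 c)
      · rw [id2]
        exact sub_mem (AddSubgroup.zsmul_mem _ h2 d) (AddSubgroup.zsmul_mem _ h1 b)
    · rw [AddSubgroup.closure_le]
      have h1 : u (1 : ℂ) ∈ AddSubgroup.closure ((u : ℂ →+ ℂ) '' ({1, τ} : Set ℂ)) :=
        AddSubgroup.subset_closure ⟨1, by simp, rfl⟩
      have h2 : u τ ∈ AddSubgroup.closure ((u : ℂ →+ ℂ) '' ({1, τ} : Set ℂ)) :=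
        AddSubgroup.subset_closure ⟨τ, by simp, rfl⟩
      rintro x (rfl | rfl)
      · have := add_mem (AddSubgroup.zsmul_mem _ h2 c) (AddSubgroup.zsmul_mem _ h1 d)
        rwa [← id3] at this
      
      · have := add_mem (AddSubgroup.zsmul_mem _ h2 a) (AddSubgroup.zsmul_mem _ h1 b)
        rwa [← id4] at this
  have happ : ∀ z : ℂ, (QuotientAddGroup.congr Λ Λhat u hmap) (QuotientAddGroup.mk z)
      = QuotientAddGroup.mk (z / α) := fun z => by
    have : (QuotientAddGroup.congr Λ Λhat u hmap) (QuotientAddGroup.mk z)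
        = QuotientAddGroup.mk (u z) := rfl
    rw [this, huapp]
  refine ⟨QuotientAddGroup.congr Λ Λhat u hmap, happ, ?_⟩
  · rw [AddMonoidHom.map_zmultiples]
    congr 1
    rw [AddEquiv.coe_toAddMonoidHom, happ]
    congr 1
    rw [div_div, mul_comm, hnorm]
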